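/- arXiv:1311.5862 — 4 statements merged into one kernel-verified Lean document; each statement's English description precedes it below -/
import Mathlib

section
/- For a discrete curve with edge frame (Tᵉ, Nᵉ, Bᵉ) and vertex frame (Tᵛ, Nᵛ, Bᵛ), one has Nᵛᵢ = Bᵛᵢ × Tᵛᵢ for every i ∈ ℤ. -/
open RealInnerProductSpace

noncomputable section

/-- Points of a discrete curve live in `ℝ³` with the Euclidean norm. -/
abbrev E3 := EuclideanSpace ℝ (Fin 3)

/-- The cross product on `ℝ³`. -/
def cross3 (u v : E3) : E3 :=
  WithLp.toLp 2 ![u 1 * v 2 - u 2 * v 1, u 2 * v 0 - u 0 * v 2, u 0 * v 1 - u 1 * v 0]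

lemma cross3_add_left (a b v : E3) : cross3 (a + b) v = cross3 a v + cross3 b v := by
  ext i; fin_cases i <;> simp [cross3] <;> ring

lemma cross3_smul_left (c : ℝ) (u v : E3) : cross3 (c • u) v = c • cross3 u v := by
  ext i; fin_cases i <;> simp [cross3] <;> ring

lemma cross3_add_right (u a b : E3) : cross3 u (a + b) = cross3 u a + cross3 u b := by
  ext i; fin_cases i <;> simp [cross3] <;> ring

lemma cross3_smul_right (c : ℝ) (u v : E3) : cross3 u (c • v) = c • cross3 u v := by
  ext i; fin_cases i <;> simp [cross3] <;> ring

lemma inner_cross3_self_left (u v : E3) : ⟪cross3 u v, u⟫ = 0 := by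
  simp [cross3, PiLp.inner_apply, Fin.sum_univ_three]; ring

lemma inner_cross3_self_right (u v : E3) : ⟪cross3 u v, v⟫ = 0 := by
  simp [cross3, PiLp.inner_apply, Fin.sum_univ_three]; ring

lemma inner_cross3_self (u v : E3) :
    ⟪cross3 u v, cross3 u v⟫ = ⟪u,u⟫ * ⟪v,v⟫ - ⟪u,v⟫^2 := by
  simp only [cross3, PiLp.inner_apply, Fin.sum_univ_three]; simp; ring

lemma norm_cross3_left (u v : E3) (hu : ‖u‖ = 1) (h : ⟪u, v⟫ = 0) :
    ‖cross3 u v‖ = ‖v‖ := by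
  have h1 := inner_cross3_self u v
  rw [real_inner_self_eq_norm_sq, real_inner_self_eq_norm_sq,
    real_inner_self_eq_norm_sq, hu, h] at h1
  nlinarith [norm_nonneg (cross3 u v), norm_nonneg v]

lemma norm_cross3_right (u v : E3) (hv : ‖v‖ = 1) (h : ⟪u, v⟫ = 0) :
    ‖cross3 u v‖ = ‖u‖ := by
  have h1 := inner_cross3_self u v
  rw [real_inner_self_eq_norm_sq, real_inner_self_eq_norm_sq,
    real_inner_self_eq_norm_sq, hv, h] at h1
  nlinarith [norm_nonneg (cross3 u v), norm_nonneg u]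

lemma norm_unit_smul (c : E3) (hc : c ≠ 0) : ‖(‖c‖⁻¹ • c : E3)‖ = 1 := by
  rw [norm_smul]; simp [norm_ne_zero_iff.mpr hc]

lemma double_normalize (c : E3) (hc : ‖c‖ = 1) : ‖c + c‖⁻¹ • (c + c) = c := by
  rw [← two_smul ℝ c, norm_smul, hc]
  rw [smul_smul]
  norm_num

/-- For a discrete curve, the vertex frame satisfies `Nᵛᵢ = Bᵛᵢ × Tᵛᵢ` for every `i`. -/
theorem vertex_frame_normal_eq_cross
    (γ T N B : ℤ → E3)
    (hlen : ∀ i : ℤ, ‖γ (i + 1) - γ i‖ = 1)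
    (hmid : ∀ i : ℤ, Even i → γ i = (2 : ℝ)⁻¹ • (γ (i + 1) + γ (i - 1)))
    (hT : ∀ i : ℤ, T i = γ (i + 1) - γ i)
    (hcross : ∀ i : ℤ, Even i → cross3 (T i) (T (i + 1)) ≠ 0)
    (hBeven : ∀ i : ℤ, Even i →
      B i = ‖cross3 (T i) (T (i + 1))‖⁻¹ • cross3 (T i) (T (i + 1)))
    (hBodd : ∀ i : ℤ, Odd i → B i = B (i - 1))
    (hN : ∀ i : ℤ, N i = cross3 (B i) (T i))
    (Tv Nv Bv : ℤ → E3)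
    (hMT : ∀ i : ℤ, T (i + 1) + T i ≠ 0)
    (hMN : ∀ i : ℤ, N (i + 1) + N i ≠ 0)
    (hMB : ∀ i : ℤ, B (i + 1) + B i ≠ 0)
    (hTv : ∀ i : ℤ, Tv i = ‖T (i + 1) + T i‖⁻¹ • (T (i + 1) + T i))
    (hNv : ∀ i : ℤ, Nv i = ‖N (i + 1) + N i‖⁻¹ • (N (i + 1) + N i))
    (hBv : ∀ i : ℤ, Bv i = ‖B (i + 1) + B i‖⁻¹ • (B (i + 1) + B i))
    : ∀ i : ℤ, Nv i = cross3 (Bv i) (Tv i) := by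
  intro i
  rcases Int.even_or_odd i with hi | hi
  · -- even case
    have hB1 : B (i + 1) = B i := by
      have h := hBodd (i + 1) (hi.add_one)
      simpa using h
    set c := cross3 (T i) (T (i + 1)) with hc
    have hBi : B i = ‖c‖⁻¹ • c := hBeven i hi
    have hBnorm : ‖B i‖ = 1 := by rw [hBi]; exact norm_unit_smul c (hcross i hi)
    have hBT : ⟪B i, T i⟫ = 0 := by
      rw [hBi, real_inner_smul_left, inner_cross3_self_left, mul_zero]
    have hBT1 : ⟪B i, T (i + 1)⟫ = 0 := by
      rw [hBi, real_inner_smul_left, inner_cross3_self_right, mul_zero]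
    have hBMT : ⟪B i, T (i + 1) + T i⟫ = 0 := by
      rw [inner_add_right, hBT, hBT1]; ring
    have hBvi : Bv i = B i := by
      rw [hBv i, hB1, double_normalize _ hBnorm]
    have hMNeq : N (i + 1) + N i = cross3 (B i) (T (i + 1) + T i) := by
      rw [hN, hN, hB1, cross3_add_right]
    rw [hNv i, hMNeq, hBvi, hTv i, cross3_smul_right,
      norm_cross3_left _ _ hBnorm hBMT]
  · -- odd case
    have hTT : T (i + 1) = T i := by
      have h := hmid (i + 1) (hi.add_one)
      rw [add_sub_cancel_right] at h
      rw [hT, hT, h]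
      module
    have hTnorm : ‖T i‖ = 1 := by rw [hT]; exact hlen i
    have hEsub : Even (i - 1) := hi.sub_odd odd_one
    have hBi : B i = ‖cross3 (T (i - 1)) (T i)‖⁻¹ • cross3 (T (i - 1)) (T i) := by
      have h := hBeven (i - 1) hEsub
      rw [sub_add_cancel] at h
      rw [hBodd i hi, h]
    have hBTi : ⟪B i, T i⟫ = 0 := by
      rw [hBi, real_inner_smul_left, inner_cross3_self_right, mul_zero]
    have hB1 : B (i + 1) = ‖cross3 (T i) (T (i + 1 + 1))‖⁻¹ •
        cross3 (T i) (T (i + 1 + 1)) := by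
      have h := hBeven (i + 1) (hi.add_one)
      rwa [hTT] at h
    have hB1Ti : ⟪B (i + 1), T i⟫ = 0 := by
      rw [hB1, real_inner_smul_left, inner_cross3_self_left, mul_zero]
    have hMBT : ⟪B (i + 1) + B i, T i⟫ = 0 := by
      rw [inner_add_left, hBTi, hB1Ti]; ring
    have hTvi : Tv i = T i := by
      rw [hTv i, hTT, double_normalize _ hTnorm]
    have hMNeq : N (i + 1) + N i = cross3 (B (i + 1) + B i) (T i) := by
      rw [hN, hN, hTT, cross3_add_left]
    rw [hNv i, hMNeq, hTvi, hBv i, cross3_smul_left,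
      norm_cross3_right _ _ hTnorm hMBT]
end
end

section
/- First discrete Frenet equation (inscribed case): for a discrete curve and every i ∈ ℤ, (DTᵉ)ᵢ = κᵢ • Nᵛᵢ, where κᵢ := ‖(DTᵉ)ᵢ‖. -/
open RealInnerProductSpace

noncomputable section

lemma cross3_self (u : E3) : cross3 u u = 0 := by
  ext j; fin_cases j <;> simp [cross3, mul_comm]

lemma cross3_add_right_s5 (x y z : E3) : cross3 x (y + z) = cross3 x y + cross3 x z := by
  ext j; fin_cases j <;> (simp [cross3]; ring)

lemma cross3_smul_left_s5 (r : ℝ) (x y : E3) : cross3 (r • x) y = r • cross3 x y := by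
  ext j; fin_cases j <;> (simp [cross3]; ring)

lemma cross3_triple (u v w : E3) :
    cross3 (cross3 u v) w = ⟪u, w⟫ • v - ⟪v, w⟫ • u := by
  ext j
  fin_cases j <;>
    (simp [cross3, PiLp.inner_apply, Fin.sum_univ_three, RCLike.inner_apply]; ring)

lemma normalize_pos_smul {w : E3} (hw : w ≠ 0) {c : ℝ} (hc : 0 < c) :
    ‖c • w‖⁻¹ • (c • w) = ‖w‖⁻¹ • w := by
  rw [norm_smul, Real.norm_eq_abs, abs_of_pos hc, smul_smul]
  congr 1
  have h1 : ‖w‖ ≠ 0 := norm_ne_zero_iff.mpr hw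
  field_simp

/-- First discrete Frenet equation (inscribed case): `(DTᵉ)ᵢ = κᵢ • Nᵛᵢ`
with `κᵢ = ‖(DTᵉ)ᵢ‖`. -/
theorem first_discrete_frenet_equation
    (γ T N B : ℤ → E3)
    (hlen : ∀ i : ℤ, ‖γ (i + 1) - γ i‖ = 1)
    (hmid : ∀ i : ℤ, Even i → γ i = (2 : ℝ)⁻¹ • (γ (i + 1) + γ (i - 1)))
    (hT : ∀ i : ℤ, T i = γ (i + 1) - γ i)
    (hcross : ∀ i : ℤ, Even i → cross3 (T i) (T (i + 1)) ≠ 0)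
    (hBeven : ∀ i : ℤ, Even i →
      B i = ‖cross3 (T i) (T (i + 1))‖⁻¹ • cross3 (T i) (T (i + 1)))
    (hBodd : ∀ i : ℤ, Odd i → B i = B (i - 1))
    (hN : ∀ i : ℤ, N i = cross3 (B i) (T i))
    (Tv Nv Bv : ℤ → E3)
    (hMT : ∀ i : ℤ, T (i + 1) + T i ≠ 0)
    (hMN : ∀ i : ℤ, N (i + 1) + N i ≠ 0)
    (hMB : ∀ i : ℤ, B (i + 1) + B i ≠ 0)
    (hTv : ∀ i : ℤ, Tv i = ‖T (i + 1) + T i‖⁻¹ • (T (i + 1) + T i))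
    (hNv : ∀ i : ℤ, Nv i = ‖N (i + 1) + N i‖⁻¹ • (N (i + 1) + N i))
    (hBv : ∀ i : ℤ, Bv i = ‖B (i + 1) + B i‖⁻¹ • (B (i + 1) + B i))
    : ∀ i : ℤ, T (i + 1) - T i = ‖T (i + 1) - T i‖ • Nv i := by
  intro i
  have hTnorm : ∀ j : ℤ, ‖T j‖ = 1 := fun j => by rw [hT]; exact hlen j
  rcases Int.even_or_odd i with he | ho
  · -- even case
    set u := T i with hu
    set v := T (i + 1) with hv
    have hb : cross3 u v ≠ 0 := hcross i he
    have hB1 : B (i + 1) = B i := by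
      have h := hBodd (i + 1) (he.add_one)
      simpa using h
    have hvu : v + u ≠ 0 := hMT i
    -- inner product computation
    have hu1 : ⟪u, u⟫ = 1 := by
      rw [real_inner_self_eq_norm_sq, hTnorm]; norm_num
    have hv1 : ⟪v, v⟫ = 1 := by
      rw [real_inner_self_eq_norm_sq, hTnorm]; norm_num
    have hpos : 0 < 1 + ⟪u, v⟫ := by
      have h2 : ‖v + u‖ ^ 2 = 2 * (1 + ⟪u, v⟫) := by
        rw [norm_add_sq_real, real_inner_comm v u]
        rw [show ‖v‖ ^ 2 = ⟪v, v⟫ from (real_inner_self_eq_norm_sq v).symm,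
          show ‖u‖ ^ 2 = ⟪u, u⟫ from (real_inner_self_eq_norm_sq u).symm, hu1, hv1]
        ring
      have hn : 0 < ‖v + u‖ ^ 2 := pow_pos (norm_pos_iff.mpr hvu) 2
      nlinarith
    have hvu' : v - u ≠ 0 := by
      intro h
      apply hb
      rw [sub_eq_zero] at h
      rw [h]
      exact cross3_self u
    -- compute N (i+1) + N i
    have hNsum : N (i + 1) + N i
        = (‖cross3 u v‖⁻¹ * (1 + ⟪u, v⟫)) • (v - u) := by
      rw [hN, hN, hB1, ← cross3_add_right_s5, hBeven i he, ← hu, ← hv,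
        cross3_smul_left_s5, cross3_triple, inner_add_right, inner_add_right,
        hu1, hv1, real_inner_comm v u]
      module
    have hcpos : 0 < ‖cross3 u v‖⁻¹ * (1 + ⟪u, v⟫) := by
      have : 0 < ‖cross3 u v‖ := norm_pos_iff.mpr hb
      positivity
    have hNv' : Nv i = ‖v - u‖⁻¹ • (v - u) := by
      rw [hNv, hNsum, normalize_pos_smul hvu' hcpos]
    rw [hNv', smul_inv_smul₀ (norm_ne_zero_iff.mpr hvu')]
  · -- odd case : T (i+1) = T i
    have hsum : γ (i + 1 + 1) + γ (i + 1 - 1) = (2 : ℝ) • γ (i + 1) := by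
      have h := hmid (i + 1) (ho.add_one)
      have h2 : (2 : ℝ) • γ (i + 1)
          = (2 : ℝ) • ((2 : ℝ)⁻¹ • (γ (i + 1 + 1) + γ (i + 1 - 1))) := by rw [← h]
      rw [smul_inv_smul₀ (two_ne_zero)] at h2
      exact h2.symm
    have hTT : T (i + 1) = T i := by
      rw [hT, hT, sub_eq_sub_iff_add_eq_add, ← two_smul ℝ (γ (i + 1))]
      simpa [show i + 1 - 1 = i from by ring] using hsum
    rw [hTT]
    simp
end
end

section
/- Discrete fundamental theorem (existence): let θ, φ : ℤ → ℝ satisfy θᵢ ∈ (0, π/2] for even i, θᵢ = 0 for odd i, φᵢ ∈ [0, π/2] for odd i, φᵢ = 0 for even i. Let γ₀ ∈ ℝ³ and let (T₀, N₀, B₀) be pairwise orthogonal unit vectors with N₀ = B₀ × T₀. Then there exist sequences γ, T, N, B : ℤ → ℝ³ with γ(0) = γ₀, (T(0), N(0), B(0)) = (T₀, N₀, B₀), satisfying for all i: γᵢ₊₁ = γᵢ + Tᵢ; for even i: Tᵢ₊₁ = cos θᵢ • Tᵢ + sin θᵢ • Nᵢ, Nᵢ₊₁ = −sin θᵢ •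 Tᵢ + cos θᵢ • Nᵢ, Bᵢ₊₁ = Bᵢ; for odd i: Tᵢ₊₁ = Tᵢ, Nᵢ₊₁ = cos φᵢ • Nᵢ + sin φᵢ • Bᵢ, Bᵢ₊₁ = −sin φᵢ • Nᵢ + cos φᵢ • Bᵢ. Moreover the resulting γ satisfies ‖(Dγ)ᵢ‖ = 1 for all i, the midpoint condition γᵢ = (γᵢ₊₁ + γᵢ₋₁)/2 for even i, its edge frame equals (T, N, B) (in particular Tᵉᵢ × Tᵉᵢ₊₁ ≠ 0 for even i), the positive-twist condition holds, and for all i the angle between Tᵢ and Tᵢ₊₁ is θᵢ and the angle between Bᵢ and Bᵢ₊₁ is φᵢ. -/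
open RealInnerProductSpace

noncomputable section

namespace DFTAux

structure St where
  g : E3
  t : E3
  n : E3
  b : E3

def Fr (T N B : E3) : Prop :=
  ⟪T, T⟫ = 1 ∧ ⟪N, N⟫ = 1 ∧ ⟪B, B⟫ = 1 ∧ ⟪T, N⟫ = 0 ∧ ⟪T, B⟫ = 0 ∧ ⟪N, B⟫ = 0 ∧
    N = cross3 B T

variable (θ φ : ℤ → ℝ)

def stp (i : ℤ) (x : St) : St :=
  if Even i then
    ⟨x.g + x.t, Real.cos (θ i) • x.t + Real.sin (θ i) • x.n,
      (-Real.sin (θ i)) • x.t + Real.cos (θ i) • x.n, x.b⟩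
  else
    ⟨x.g + x.t, x.t, Real.cos (φ i) • x.n + Real.sin (φ i) • x.b,
      (-Real.sin (φ i)) • x.n + Real.cos (φ i) • x.b⟩

def inv (i : ℤ) (x : St) : St :=
  if Even i then
    ⟨x.g - (Real.cos (θ i) • x.t + (-Real.sin (θ i)) • x.n),
      Real.cos (θ i) • x.t + (-Real.sin (θ i)) • x.n,
      (-(-Real.sin (θ i))) • x.t + Real.cos (θ i) • x.n, x.b⟩
  else
    ⟨x.g - x.t, x.t, Real.cos (φ i) • x.n + (-Real.sin (φ i)) • x.b,
      (-(-Real.sin (φ i))) • x.n + Real.cos (φ i) • x.b⟩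

lemma stp_inv (i : ℤ) (x : St) : stp θ φ i (inv θ φ i x) = x := by
  obtain ⟨g, t, n, b⟩ := x
  by_cases h : Even i
  · simp only [stp, inv, if_pos h, St.mk.injEq]
    refine ⟨by module, ?_, ?_, trivial⟩ <;>
      (match_scalars <;> linarith [Real.sin_sq_add_cos_sq (θ i)])
  · simp only [stp, inv, if_neg h, St.mk.injEq]
    refine ⟨by module, trivial, ?_, ?_⟩ <;>
      (match_scalars <;> linarith [Real.sin_sq_add_cos_sq (φ i)])

def fwd (x0 : St) : ℕ → St
  | 0 => x0
  | n + 1 => stp θ φ n (fwd x0 n)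

def bwd (x0 : St) : ℕ → St
  | 0 => x0
  | n + 1 => inv θ φ (-(n + 1)) (bwd x0 n)

def Fseq (x0 : St) : ℤ → St
  | Int.ofNat n => fwd θ φ x0 n
  | Int.negSucc n => bwd θ φ x0 (n + 1)

lemma Fseq_zero (x0 : St) : Fseq θ φ x0 0 = x0 := rfl

lemma Fseq_succ (x0 : St) (i : ℤ) :
    Fseq θ φ x0 (i + 1) = stp θ φ i (Fseq θ φ x0 i) := by
  cases i with
  | ofNat n =>
    have h : (Int.ofNat n) + 1 = Int.ofNat (n + 1) := rfl
    rw [h]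
    rfl
  | negSucc n =>
    cases n with
    | zero =>
      have h : (Int.negSucc 0) + 1 = (0 : ℤ) := rfl
      rw [h]
      have h2 : Fseq θ φ x0 (Int.negSucc 0) = inv θ φ (-1) x0 := by
        show bwd θ φ x0 1 = _
        show inv θ φ (-(((0:ℕ):ℤ) + 1)) x0 = _
        norm_num
      rw [h2]
      have h3 : (Int.negSucc 0) = (-1 : ℤ) := rfl
      rw [h3, stp_inv]
      rfl
    | succ n =>
      have h : (Int.negSucc (n + 1)) + 1 = Int.negSucc n := rfl
      rw [h]
      show bwd θ φ x0 (n + 1) = stp θ φ _ (bwd θ φ x0 (n + 2))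
      have h2 : bwd θ φ x0 (n + 2) = inv θ φ (-((n:ℤ) + 1 + 1)) (bwd θ φ x0 (n + 1)) := by
        show inv θ φ (-(((n+1:ℕ):ℤ) + 1)) _ = _
        norm_num
      have h3 : (Int.negSucc (n + 1)) = -((n:ℤ) + 1 + 1) := by
        rw [Int.negSucc_eq]; push_cast; ring
      rw [h2, h3, stp_inv]

lemma inner3 (u v : E3) : ⟪u, v⟫ = u 0 * v 0 + u 1 * v 1 + u 2 * v 2 := by
  simp [PiLp.inner_apply, Fin.sum_univ_three, RCLike.inner_apply]
  ring

lemma triple (u v w : E3) : cross3 u (cross3 v w) = ⟪u, w⟫ • v - ⟪u, v⟫ • w := by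
  ext i
  fin_cases i <;>
    simp [cross3, inner3, PiLp.smul_apply, PiLp.sub_apply, smul_eq_mul, Fin.sum_univ_three] <;>
    ring

lemma cross3_add_right (u v w : E3) : cross3 u (v + w) = cross3 u v + cross3 u w := by
  ext i
  fin_cases i <;> simp [cross3, PiLp.add_apply] <;> ring

lemma cross3_smul_right (a : ℝ) (u v : E3) : cross3 u (a • v) = a • cross3 u v := by
  ext i
  fin_cases i <;> simp [cross3, PiLp.smul_apply, smul_eq_mul] <;> ring

lemma cross3_add_left (u v w : E3) : cross3 (u + v) w = cross3 u w + cross3 v w := by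
  ext i
  fin_cases i <;> simp [cross3, PiLp.add_apply] <;> ring

lemma cross3_smul_left (a : ℝ) (u v : E3) : cross3 (a • u) v = a • cross3 u v := by
  ext i
  fin_cases i <;> simp [cross3, PiLp.smul_apply, smul_eq_mul] <;> ring

lemma cross3_self (u : E3) : cross3 u u = 0 := by
  ext i
  fin_cases i <;> simp [cross3] <;> ring

lemma cross3_anticomm (u v : E3) : cross3 u v = -cross3 v u := by
  ext i
  fin_cases i <;> simp [cross3, PiLp.neg_apply] <;> ring

lemma cross_TN {T N B : E3} (h : Fr T N B) : cross3 T N = B := by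
  obtain ⟨hTT, hNN, hBB, hTN, hTB, hNB, hX⟩ := h
  rw [hX, triple, hTT, hTB]
  simp

lemma cross_BN {T N B : E3} (h : Fr T N B) : cross3 B N = -T := by
  obtain ⟨hTT, hNN, hBB, hTN, hTB, hNB, hX⟩ := h
  have hBT : ⟪B, T⟫ = 0 := by rw [real_inner_comm]; exact hTB
  rw [hX, triple, hBT, hBB]
  simp

lemma cross_NT {T N B : E3} (h : Fr T N B) : cross3 N T = -B := by
  rw [cross3_anticomm, cross_TN h]

lemma rot1 {T N B : E3} (c s : ℝ) (hcs : s ^ 2 + c ^ 2 = 1) (h : Fr T N B) :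
    Fr (c • T + s • N) ((-s) • T + c • N) B := by
  have hBN := cross_BN h
  obtain ⟨hTT, hNN, hBB, hTN, hTB, hNB, hX⟩ := h
  have hNT : ⟪N, T⟫ = 0 := by rw [real_inner_comm]; exact hTN
  refine ⟨?_, ?_, hBB, ?_, ?_, ?_, ?_⟩
  · simp only [inner_add_left, inner_add_right, real_inner_smul_left, real_inner_smul_right,
      hTT, hNN, hTN, hNT]
    linear_combination hcs
  · simp only [inner_add_left, inner_add_right, real_inner_smul_left, real_inner_smul_right,
      hTT, hNN, hTN, hNT]
    linear_combination hcs
  · simp only [inner_add_left, inner_add_right, real_inner_smul_left, real_inner_smul_right,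
      hTT, hNN, hTN, hNT]
    ring
  · simp only [inner_add_left, real_inner_smul_left, hTB, hNB]
    ring
  · simp only [inner_add_left, real_inner_smul_left, hTB, hNB]
    ring
  · rw [cross3_add_right, cross3_smul_right, cross3_smul_right, ← hX, hBN]
    module

lemma rot2 {T N B : E3} (c s : ℝ) (hcs : s ^ 2 + c ^ 2 = 1) (h : Fr T N B) :
    Fr T (c • N + s • B) ((-s) • N + c • B) := by
  have hNT := cross_NT h
  obtain ⟨hTT, hNN, hBB, hTN, hTB, hNB, hX⟩ := h
  have hBN : ⟪B, N⟫ = 0 := by rw [real_inner_comm]; exact hNB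
  refine ⟨hTT, ?_, ?_, ?_, ?_, ?_, ?_⟩
  · simp only [inner_add_left, inner_add_right, real_inner_smul_left, real_inner_smul_right,
      hNN, hBB, hNB, hBN]
    linear_combination hcs
  · simp only [inner_add_left, inner_add_right, real_inner_smul_left, real_inner_smul_right,
      hNN, hBB, hNB, hBN]
    linear_combination hcs
  · simp only [inner_add_right, real_inner_smul_right, hTN, hTB]
    ring
  · simp only [inner_add_right, real_inner_smul_right, hTN, hTB]
    ring
  · simp only [inner_add_left, inner_add_right, real_inner_smul_left, real_inner_smul_right,
      hNN, hBB, hNB, hBN]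
    ring
  · rw [cross3_add_left, cross3_smul_left, cross3_smul_left, hNT, ← hX]
    module

def FrSt (x : St) : Prop := Fr x.t x.n x.b

lemma stp_fr (i : ℤ) (x : St) (h : FrSt x) : FrSt (stp θ φ i x) := by
  unfold stp
  split_ifs with hi
  · exact rot1 _ _ (Real.sin_sq_add_cos_sq (θ i)) h
  · exact rot2 _ _ (Real.sin_sq_add_cos_sq (φ i)) h

lemma inv_fr (i : ℤ) (x : St) (h : FrSt x) : FrSt (inv θ φ i x) := by
  unfold inv
  split_ifs with hi
  · exact rot1 _ _ (by rw [neg_sq]; exact Real.sin_sq_add_cos_sq (θ i)) h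
  · exact rot2 _ _ (by rw [neg_sq]; exact Real.sin_sq_add_cos_sq (φ i)) h

lemma Fseq_fr (x0 : St) (h : FrSt x0) (i : ℤ) : FrSt (Fseq θ φ x0 i) := by
  cases i with
  | ofNat n =>
    show FrSt (fwd θ φ x0 n)
    induction n with
    | zero => exact h
    | succ n ih => exact stp_fr θ φ _ _ ih
  | negSucc n =>
    show FrSt (bwd θ φ x0 (n + 1))
    induction n with
    | zero => exact inv_fr θ φ _ _ h
    | succ n ih => exact inv_fr θ φ _ _ ih

end DFTAux

/-- Discrete fundamental theorem (existence): given turning angles `θ` (supported on even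
indices, with values in `(0, π/2]` there) and twisting angles `φ` (supported on odd indices,
with values in `[0, π/2]` there), and an initial point together with an initial positively
oriented orthonormal frame, there is a discrete curve, unique solution of the discrete frame
equations, realizing these data; it is parametrized by arc length, satisfies the midpoint
condition, its edge Frenet frame is the constructed frame, the positive-twist condition
holds, and `θᵢ`, `φᵢ` are the angles between consecutive tangents and binormals. -/

theorem discrete_fundamental_theorem_existence
    (θ φ : ℤ → ℝ)
    (hθe : ∀ i : ℤ, Even i → θ i ∈ Set.Ioc 0 (Real.pi / 2))
    (hθo : ∀ i : ℤ, Odd i → θ i = 0)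
    (hφo : ∀ i : ℤ, Odd i → φ i ∈ Set.Icc 0 (Real.pi / 2))
    (hφe : ∀ i : ℤ, Even i → φ i = 0)
    (γ₀ T₀ N₀ B₀ : E3)
    (hT₀ : ‖T₀‖ = 1) (hN₀ : ‖N₀‖ = 1) (hB₀ : ‖B₀‖ = 1)
    (hTN₀ : ⟪T₀, N₀⟫ = 0) (hTB₀ : ⟪T₀, B₀⟫ = 0) (hNB₀ : ⟪N₀, B₀⟫ = 0)
    (hor₀ : N₀ = cross3 B₀ T₀) :
    ∃ γ T N B : ℤ → E3,
      γ 0 = γ₀ ∧ T 0 = T₀ ∧ N 0 = N₀ ∧ B 0 = B₀ ∧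
      (∀ i : ℤ, γ (i + 1) = γ i + T i) ∧
      (∀ i : ℤ, Even i →
        T (i + 1) = Real.cos (θ i) • T i + Real.sin (θ i) • N i ∧
        N (i + 1) = (-Real.sin (θ i)) • T i + Real.cos (θ i) • N i ∧
        B (i + 1) = B i) ∧
      (∀ i : ℤ, Odd i →
        T (i + 1) = T i ∧
        N (i + 1) = Real.cos (φ i) • N i + Real.sin (φ i) • B i ∧
        B (i + 1) = (-Real.sin (φ i)) • N i + Real.cos (φ i) • B i) ∧
      (∀ i : ℤ, ‖γ (i + 1) - γ i‖ = 1) ∧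
      (∀ i : ℤ, Even i → γ i = (2 : ℝ)⁻¹ • (γ (i + 1) + γ (i - 1))) ∧
      (∀ i : ℤ, T i = γ (i + 1) - γ i) ∧
      (∀ i : ℤ, Even i → cross3 (T i) (T (i + 1)) ≠ 0) ∧
      (∀ i : ℤ, Even i →
        B i = ‖cross3 (T i) (T (i + 1))‖⁻¹ • cross3 (T i) (T (i + 1))) ∧
      (∀ i : ℤ, Odd i → B i = B (i - 1)) ∧
      (∀ i : ℤ, N i = cross3 (B i) (T i)) ∧
      (∀ i : ℤ, Odd i → ⟪B (i + 1), N i⟫ ≤ 0) ∧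
      (∀ i : ℤ, InnerProductGeometry.angle (T i) (T (i + 1)) = θ i) ∧
      (∀ i : ℤ, InnerProductGeometry.angle (B i) (B (i + 1)) = φ i) := by
  classical
  have hpi := Real.pi_pos
  have inner_one : ∀ u : E3, ‖u‖ = 1 → ⟪u, u⟫ = 1 := by
    intro u hu
    rw [real_inner_self_eq_norm_mul_norm, hu]; norm_num
  set x0 : DFTAux.St := ⟨γ₀, T₀, N₀, B₀⟩ with hx0
  set γ : ℤ → E3 := fun i => (DFTAux.Fseq θ φ x0 i).g with hγdef
  set T : ℤ → E3 := fun i => (DFTAux.Fseq θ φ x0 i).t with hTdef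
  set N : ℤ → E3 := fun i => (DFTAux.Fseq θ φ x0 i).n with hNdef
  set B : ℤ → E3 := fun i => (DFTAux.Fseq θ φ x0 i).b with hBdef
  have hfr0 : DFTAux.FrSt x0 :=
    ⟨inner_one _ hT₀, inner_one _ hN₀, inner_one _ hB₀, hTN₀, hTB₀, hNB₀, hor₀⟩
  have hfr : ∀ i : ℤ, DFTAux.Fr (T i) (N i) (B i) := fun i => DFTAux.Fseq_fr θ φ x0 hfr0 i
  have hsucc := DFTAux.Fseq_succ θ φ x0
  have hγs : ∀ i : ℤ, γ (i + 1) = γ i + T i := by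
    intro i
    show (DFTAux.Fseq θ φ x0 (i + 1)).g = _
    rw [hsucc i]
    unfold DFTAux.stp
    split_ifs <;> rfl
  have hTe : ∀ i : ℤ, Even i →
      T (i + 1) = Real.cos (θ i) • T i + Real.sin (θ i) • N i ∧
      N (i + 1) = (-Real.sin (θ i)) • T i + Real.cos (θ i) • N i ∧
      B (i + 1) = B i := by
    intro i hi
    have h := hsucc i
    rw [DFTAux.stp, if_pos hi] at h
    refine ⟨?_, ?_, ?_⟩
    · show (DFTAux.Fseq θ φ x0 (i + 1)).t = _
      rw [h]
    · show (DFTAux.Fseq θ φ x0 (i + 1)).n = _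
      rw [h]
    · show (DFTAux.Fseq θ φ x0 (i + 1)).b = _
      rw [h]
  have hTo : ∀ i : ℤ, Odd i →
      T (i + 1) = T i ∧
      N (i + 1) = Real.cos (φ i) • N i + Real.sin (φ i) • B i ∧
      B (i + 1) = (-Real.sin (φ i)) • N i + Real.cos (φ i) • B i := by
    intro i hi
    have h := hsucc i
    rw [DFTAux.stp, if_neg (Int.not_even_iff_odd.mpr hi)] at h
    refine ⟨?_, ?_, ?_⟩
    · show (DFTAux.Fseq θ φ x0 (i + 1)).t = _
      rw [h]
    · show (DFTAux.Fseq θ φ x0 (i + 1)).n = _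
      rw [h]
    · show (DFTAux.Fseq θ φ x0 (i + 1)).b = _
      rw [h]
  have norm_of : ∀ u : E3, ⟪u, u⟫ = 1 → ‖u‖ = 1 := by
    intro u hu
    have h := real_inner_self_eq_norm_mul_norm u
    nlinarith [norm_nonneg u]
  have hTn : ∀ i : ℤ, ‖T i‖ = 1 := fun i => norm_of _ (hfr i).1
  have hNn : ∀ i : ℤ, ‖N i‖ = 1 := fun i => norm_of _ (hfr i).2.1
  have hBn : ∀ i : ℤ, ‖B i‖ = 1 := fun i => norm_of _ (hfr i).2.2.1
  have hTz : ∀ i : ℤ, T i ≠ 0 := by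
    intro i h
    have := hTn i
    rw [h] at this
    simp at this
  have hBz : ∀ i : ℤ, B i ≠ 0 := by
    intro i h
    have := hBn i
    rw [h] at this
    simp at this
  have hcrossE : ∀ i : ℤ, Even i →
      cross3 (T i) (T (i + 1)) = Real.sin (θ i) • B i := by
    intro i hi
    rw [(hTe i hi).1, DFTAux.cross3_add_right, DFTAux.cross3_smul_right,
      DFTAux.cross3_smul_right, DFTAux.cross3_self, DFTAux.cross_TN (hfr i)]
    simp
  have hsinθ : ∀ i : ℤ, Even i → 0 < Real.sin (θ i) := by
    intro i hi
    exact Real.sin_pos_of_pos_of_lt_pi (hθe i hi).1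
      (lt_of_le_of_lt (hθe i hi).2 (by linarith))
  refine ⟨γ, T, N, B, rfl, rfl, rfl, rfl, hγs, hTe, hTo, ?_, ?_, ?_, ?_, ?_, ?_, ?_, ?_, ?_, ?_⟩
  · intro i
    rw [hγs i, add_sub_cancel_left]
    exact hTn i
  · intro i hi
    have h1 := hγs i
    have h2 := hγs (i - 1)
    have hi1 : i - 1 + 1 = i := by ring
    rw [hi1] at h2
    have hodd : Odd (i - 1) := by
      obtain ⟨k, hk⟩ := hi
      exact ⟨k - 1, by omega⟩
    have hTT : T i = T (i - 1) := by
      have := (hTo (i - 1) hodd).1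
      rwa [hi1] at this
    have h3 : γ (i - 1) = γ i - T (i - 1) := by
      rw [h2]; abel
    rw [h1, h3, ← hTT]
    module
  · intro i
    rw [hγs i, add_sub_cancel_left]
  · intro i hi
    rw [hcrossE i hi]
    intro h
    rcases smul_eq_zero.mp h with h | h
    · exact (hsinθ i hi).ne' h
    · exact hBz i h
  · intro i hi
    rw [hcrossE i hi, norm_smul, hBn i, Real.norm_eq_abs, abs_of_pos (hsinθ i hi)]
    rw [mul_one, smul_smul, inv_mul_cancel₀ (hsinθ i hi).ne', one_smul]
  · intro i hi
    have he : Even (i - 1) := by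
      obtain ⟨k, hk⟩ := hi
      exact ⟨k, by omega⟩
    have := (hTe (i - 1) he).2.2
    have hi1 : i - 1 + 1 = i := by ring
    rw [hi1] at this
    exact this
  · intro i
    exact (hfr i).2.2.2.2.2.2
  · intro i hi
    have h1 : ⟪N i, N i⟫ = 1 := (hfr i).2.1
    have h2 : ⟪B i, N i⟫ = 0 := by
      rw [real_inner_comm]; exact (hfr i).2.2.2.2.2.1
    rw [(hTo i hi).2.2, inner_add_left, real_inner_smul_left, real_inner_smul_left, h1, h2]
    have hs : 0 ≤ Real.sin (φ i) :=
      Real.sin_nonneg_of_nonneg_of_le_pi (hφo i hi).1 (by linarith [(hφo i hi).2])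
    nlinarith
  · intro i
    rcases Int.even_or_odd i with hi | hi
    · have h1 : ⟪T i, T (i + 1)⟫ = Real.cos (θ i) := by
        rw [(hTe i hi).1, inner_add_right, real_inner_smul_right, real_inner_smul_right,
          (hfr i).1, (hfr i).2.2.2.1]
        ring
      unfold InnerProductGeometry.angle
      rw [h1, hTn i, hTn (i + 1)]
      norm_num
      exact Real.arccos_cos (le_of_lt (hθe i hi).1) (by linarith [(hθe i hi).2])
    · rw [(hTo i hi).1, hθo i hi]
      exact InnerProductGeometry.angle_self (hTz i)
  · intro i
    rcases Int.even_or_odd i with hi | hi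
    · rw [(hTe i hi).2.2, hφe i hi]
      exact InnerProductGeometry.angle_self (hBz i)
    · have h1 : ⟪B i, B (i + 1)⟫ = Real.cos (φ i) := by
        rw [(hTo i hi).2.2, inner_add_right, real_inner_smul_right, real_inner_smul_right,
          (hfr i).2.2.1]
        have : ⟪B i, N i⟫ = 0 := by
          rw [real_inner_comm]; exact (hfr i).2.2.2.2.2.1
        rw [this]
        ring
      unfold InnerProductGeometry.angle
      rw [h1, hBn i, hBn (i + 1)]
      norm_num
      exact Real.arccos_cos (hφo i hi).1 (by linarith [(hφo i hi).2])
end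
end

section
/- Discrete fundamental theorem (uniqueness): let θ, φ : ℤ → ℝ satisfy θᵢ ∈ (0, π/2] for even i, θᵢ = 0 for odd i, φᵢ ∈ [0, π/2] for odd i, φᵢ = 0 for even i. Let γ₀ ∈ ℝ³ and let (T₀, N₀, B₀) be pairwise orthogonal unit vectors with N₀ = B₀ × T₀. If γ and γ̃ are two discrete curves, each satisfying: unit edge lengths ‖(Dγ)ᵢ‖ = 1 for all i, the midpoint condition at even indices, Tᵉᵢ × Tᵉᵢ₊₁ ≠ 0 for even i, the positive-twist condition, initial data γ(0) = γ₀ and (Tᵉ₀, Nᵉ₀, Bᵉ₀) = (T₀, N₀, B₀), the angle between Tᵉᵢ and Tᵉᵢ₊₁ equal to θᵢ for all i, and the angle between Bᵉᵢ and Bᵉᵢ₊₁ equal to φᵢ for all i, then γ = γ̃. -/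
open RealInnerProductSpace

noncomputable section

namespace DFTUnique

lemma inner3 (u v : E3) : ⟪u, v⟫ = u 0 * v 0 + u 1 * v 1 + u 2 * v 2 := by
  simp [PiLp.inner_apply, RCLike.inner_apply, Fin.sum_univ_three, mul_comm]

lemma cross3_apply0 (u v : E3) : cross3 u v 0 = u 1 * v 2 - u 2 * v 1 := rfl
lemma cross3_apply1 (u v : E3) : cross3 u v 1 = u 2 * v 0 - u 0 * v 2 := rfl
lemma cross3_apply2 (u v : E3) : cross3 u v 2 = u 0 * v 1 - u 1 * v 0 := rfl

lemma inner_cross_left (u v : E3) : ⟪cross3 u v, u⟫ = 0 := by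
  simp only [inner3, cross3_apply0, cross3_apply1, cross3_apply2]; ring

lemma inner_cross_right (u v : E3) : ⟪cross3 u v, v⟫ = 0 := by
  simp only [inner3, cross3_apply0, cross3_apply1, cross3_apply2]; ring

lemma triple_cyclic (u v w : E3) : ⟪cross3 u v, w⟫ = ⟪cross3 v w, u⟫ := by
  simp only [inner3, cross3_apply0, cross3_apply1, cross3_apply2]; ring

lemma cross3_anticomm (u v : E3) : cross3 v u = -cross3 u v := by
  ext i; fin_cases i <;>
    simp [cross3_apply0, cross3_apply1, cross3_apply2, cross3] <;> ring

lemma norm_sq_cross (u v : E3) :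
    ‖cross3 u v‖ ^ 2 = ‖u‖ ^ 2 * ‖v‖ ^ 2 - ⟪u, v⟫ ^ 2 := by
  have h1 := real_inner_self_eq_norm_sq (cross3 u v)
  have h2 := real_inner_self_eq_norm_sq u
  have h3 := real_inner_self_eq_norm_sq v
  rw [← h1, ← h2, ← h3]
  simp only [inner3, cross3_apply0, cross3_apply1, cross3_apply2]; ring

lemma unit_inner_one {u v : E3} (hu : ‖u‖ = 1) (hv : ‖v‖ = 1) (h : ⟪u, v⟫ = 1) :
    u = v := by
  have h2 : ‖u - v‖ ^ 2 = 0 := by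
    rw [norm_sub_sq_real, hu, hv, h]; ring
  have := pow_eq_zero_iff (n := 2) (by norm_num) |>.mp h2
  rwa [norm_eq_zero, sub_eq_zero] at this

lemma inner_eq_cos_angle {u v : E3} (hu : ‖u‖ = 1) (hv : ‖v‖ = 1) :
    ⟪u, v⟫ = Real.cos (InnerProductGeometry.angle u v) := by
  rw [InnerProductGeometry.cos_angle, hu, hv]; norm_num

lemma decomp_frame (t n b : E3) (ht : ‖t‖ = 1) (hn : ‖n‖ = 1) (hb : ‖b‖ = 1)
    (htn : ⟪t, n⟫ = 0) (htb : ⟪t, b⟫ = 0) (hnb : ⟪n, b⟫ = 0) (v : E3) :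
    v = ⟪t, v⟫ • t + ⟪n, v⟫ • n + ⟪b, v⟫ • b := by
  have h11 : ⟪t, t⟫ = 1 := by rw [real_inner_self_eq_norm_sq, ht]; norm_num
  have h22 : ⟪n, n⟫ = 1 := by rw [real_inner_self_eq_norm_sq, hn]; norm_num
  have h33 : ⟪b, b⟫ = 1 := by rw [real_inner_self_eq_norm_sq, hb]; norm_num
  have hnt : ⟪n, t⟫ = 0 := by rw [real_inner_comm]; exact htn
  have hbt : ⟪b, t⟫ = 0 := by rw [real_inner_comm]; exact htb
  have hbn : ⟪b, n⟫ = 0 := by rw [real_inner_comm]; exact hnb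
  have horth : Orthonormal ℝ ![t, n, b] := by
    rw [orthonormal_iff_ite]
    intro i j
    fin_cases i <;> fin_cases j <;>
      simp only [Fin.mk.injEq, Matrix.cons_val_zero, Matrix.cons_val_one,
        Matrix.cons_val_two, Matrix.head_cons, Matrix.tail_cons,
        Nat.reduceEqDiff, reduceIte, if_true, if_false, eq_self_iff_true] <;>
      first
        | exact h11 | exact h22 | exact h33
        | exact htn | exact htb | exact hnb
        | exact hnt | exact hbt | exact hbn
  have hcard : Fintype.card (Fin 3) = Module.finrank ℝ E3 := by
    simp [finrank_euclideanSpace]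
  let bas := basisOfOrthonormalOfCardEqFinrank horth hcard
  have hbas : ⇑bas = ![t, n, b] := coe_basisOfOrthonormalOfCardEqFinrank horth hcard
  let onb : OrthonormalBasis (Fin 3) ℝ E3 := bas.toOrthonormalBasis (hbas ▸ horth)
  have honb : ⇑onb = ![t, n, b] := by
    simp only [onb, Module.Basis.coe_toOrthonormalBasis, hbas]
  have hsum := onb.sum_repr' v
  rw [honb, Fin.sum_univ_three] at hsum
  simp only [Matrix.cons_val_zero, Matrix.cons_val_one, Matrix.cons_val_two,
    Matrix.head_cons, Matrix.tail_cons] at hsum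
  exact hsum.symm

lemma plane_unique (t n b : E3) (ht : ‖t‖ = 1) (hn : ‖n‖ = 1) (hb : ‖b‖ = 1)
    (htn : ⟪t, n⟫ = 0) (htb : ⟪t, b⟫ = 0) (hnb : ⟪n, b⟫ = 0)
    {u v : E3} (hu : ‖u‖ = 1) (hv : ‖v‖ = 1)
    (hbu : ⟪b, u⟫ = 0) (hbv : ⟪b, v⟫ = 0)
    (htuv : ⟪t, u⟫ = ⟪t, v⟫)
    (hnu : 0 ≤ ⟪n, u⟫) (hnv : 0 ≤ ⟪n, v⟫) : u = v := by
  have key : ∀ w : E3, ‖w‖ = 1 → ⟪b, w⟫ = 0 → 0 ≤ ⟪n, w⟫ →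
      ⟪n, w⟫ = Real.sqrt (1 - ⟪t, w⟫ ^ 2) := by
    intro w hw hbw hnw
    have hd := decomp_frame t n b ht hn hb htn htb hnb w
    have hnorm : (1 : ℝ) = ⟪t, w⟫ ^ 2 + ⟪n, w⟫ ^ 2 + ⟪b, w⟫ ^ 2 := by
      have h1 : ⟪w, w⟫ = 1 := by rw [real_inner_self_eq_norm_sq, hw]; norm_num
      calc (1 : ℝ) = ⟪w, w⟫ := h1.symm
        _ = ⟪w, ⟪t, w⟫ • t + ⟪n, w⟫ • n + ⟪b, w⟫ • b⟫ := by rw [← hd]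
        _ = ⟪t, w⟫ * ⟪w, t⟫ + ⟪n, w⟫ * ⟪w, n⟫ + ⟪b, w⟫ * ⟪w, b⟫ := by
              rw [inner_add_right, inner_add_right, real_inner_smul_right,
                real_inner_smul_right, real_inner_smul_right]
        _ = ⟪t, w⟫ ^ 2 + ⟪n, w⟫ ^ 2 + ⟪b, w⟫ ^ 2 := by
              rw [real_inner_comm w t, real_inner_comm w n, real_inner_comm w b]; ring
    have hsq : ⟪n, w⟫ ^ 2 = 1 - ⟪t, w⟫ ^ 2 := by rw [hnorm, hbw]; ring
    rw [← hsq, Real.sqrt_sq hnw]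
  have hnuv : ⟪n, u⟫ = ⟪n, v⟫ := by
    rw [key u hu hbu hnu, key v hv hbv hnv, htuv]
  calc u = ⟪t, u⟫ • t + ⟪n, u⟫ • n + ⟪b, u⟫ • b :=
        decomp_frame t n b ht hn hb htn htb hnb u
    _ = ⟪t, v⟫ • t + ⟪n, v⟫ • n + ⟪b, v⟫ • b := by rw [htuv, hnuv, hbu, hbv]
    _ = v := (decomp_frame t n b ht hn hb htn htb hnb v).symm

/-- All the facts about a single admissible discrete curve that are needed for the
uniqueness argument. -/
structure Pack (θ φ : ℤ → ℝ) (γ T N B : ℤ → E3) : Prop where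
  tnorm : ∀ i : ℤ, ‖T i‖ = 1
  nnorm : ∀ i : ℤ, ‖N i‖ = 1
  bnorm : ∀ i : ℤ, ‖B i‖ = 1
  tn : ∀ i : ℤ, ⟪T i, N i⟫ = 0
  tb : ∀ i : ℤ, ⟪T i, B i⟫ = 0
  nb : ∀ i : ℤ, ⟪N i, B i⟫ = 0
  norient : ∀ i : ℤ, N i = cross3 (B i) (T i)
  gstep : ∀ i : ℤ, γ (i + 1) = γ i + T i
  gback : ∀ i : ℤ, γ (i - 1) = γ i - T (i - 1)
  tOdd : ∀ i : ℤ, Odd i → T (i + 1) = T i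
  bOdd : ∀ i : ℤ, Odd i → B i = B (i - 1)
  innTT : ∀ i : ℤ, ⟪T i, T (i + 1)⟫ = Real.cos (θ i)
  innBB : ∀ i : ℤ, ⟪B i, B (i + 1)⟫ = Real.cos (φ i)
  fE1 : ∀ i : ℤ, Even i → ⟪B i, T (i + 1)⟫ = 0
  fE2 : ∀ i : ℤ, Even i → 0 ≤ ⟪N i, T (i + 1)⟫
  fO1 : ∀ i : ℤ, Odd i → ⟪B i, T (i - 1)⟫ = 0
  fO2 : ∀ i : ℤ, Odd i → ⟪N i, T (i - 1)⟫ ≤ 0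
  fT : ∀ i : ℤ, Odd i → ⟪T i, B (i + 1)⟫ = 0
  fTw : ∀ i : ℤ, Odd i → ⟪N i, B (i + 1)⟫ ≤ 0
  fBm : ∀ i : ℤ, Even i → 0 ≤ ⟪N i, B (i - 1)⟫
  fBmT : ∀ i : ℤ, Even i → ⟪T i, B (i - 1)⟫ = 0

lemma mk_pack (θ φ : ℤ → ℝ)
    (hθo : ∀ i : ℤ, Odd i → θ i = 0)
    (γ T N B : ℤ → E3)
    (hlen : ∀ i : ℤ, ‖γ (i + 1) - γ i‖ = 1)
    (hT : ∀ i : ℤ, T i = γ (i + 1) - γ i)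
    (hcross : ∀ i : ℤ, Even i → cross3 (T i) (T (i + 1)) ≠ 0)
    (hBeven : ∀ i : ℤ, Even i →
      B i = ‖cross3 (T i) (T (i + 1))‖⁻¹ • cross3 (T i) (T (i + 1)))
    (hBodd : ∀ i : ℤ, Odd i → B i = B (i - 1))
    (hN : ∀ i : ℤ, N i = cross3 (B i) (T i))
    (htwist : ∀ i : ℤ, Odd i → ⟪B (i + 1), N i⟫ ≤ 0)
    (hangT : ∀ i : ℤ, InnerProductGeometry.angle (T i) (T (i + 1)) = θ i)
    (hangB : ∀ i : ℤ, InnerProductGeometry.angle (B i) (B (i + 1)) = φ i) :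
    Pack θ φ γ T N B := by
  -- parity helpers
  have evsub : ∀ i : ℤ, Odd i → Even (i - 1) := by
    intro i hi; rcases hi with ⟨k, hk⟩; exact ⟨k, by omega⟩
  have odsub : ∀ i : ℤ, Even i → Odd (i - 1) := by
    intro i hi; rcases hi with ⟨k, hk⟩; exact ⟨k - 1, by omega⟩
  -- basic norms and orthogonality
  have tnorm : ∀ i : ℤ, ‖T i‖ = 1 := fun i => by rw [hT i]; exact hlen i
  -- rewrite of hBeven at i-1 for odd i
  have hBodd' : ∀ i : ℤ, Odd i →
      B i = ‖cross3 (T (i - 1)) (T i)‖⁻¹ • cross3 (T (i - 1)) (T i) := by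
    intro i hi
    have h := hBeven (i - 1) (evsub i hi)
    rw [sub_add_cancel] at h
    rw [hBodd i hi, h]
  have hcross' : ∀ i : ℤ, Odd i → cross3 (T (i - 1)) (T i) ≠ 0 := by
    intro i hi
    have h := hcross (i - 1) (evsub i hi)
    rwa [sub_add_cancel] at h
  have bnorm : ∀ i : ℤ, ‖B i‖ = 1 := by
    intro i
    rcases Int.even_or_odd i with hi | hi
    · rw [hBeven i hi, norm_smul, norm_inv, norm_norm,
        inv_mul_cancel₀ (norm_ne_zero_iff.2 (hcross i hi))]
    · rw [hBodd' i hi, norm_smul, norm_inv, norm_norm,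
        inv_mul_cancel₀ (norm_ne_zero_iff.2 (hcross' i hi))]
  have tb : ∀ i : ℤ, ⟪T i, B i⟫ = 0 := by
    intro i
    rcases Int.even_or_odd i with hi | hi
    · rw [hBeven i hi, real_inner_smul_right, real_inner_comm,
        inner_cross_left, mul_zero]
    · rw [hBodd' i hi, real_inner_smul_right, real_inner_comm,
        inner_cross_right, mul_zero]
  have bt : ∀ i : ℤ, ⟪B i, T i⟫ = 0 := fun i => by
    rw [real_inner_comm]; exact tb i
  have nnorm : ∀ i : ℤ, ‖N i‖ = 1 := by
    intro i
    have h : ‖N i‖ ^ 2 = 1 := by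
      rw [hN i, norm_sq_cross, bnorm i, tnorm i, bt i]; ring
    have := Real.sqrt_sq (norm_nonneg (N i))
    rw [← this, h, Real.sqrt_one]
  have tn : ∀ i : ℤ, ⟪T i, N i⟫ = 0 := by
    intro i; rw [hN i, real_inner_comm, inner_cross_right]
  have nb : ∀ i : ℤ, ⟪N i, B i⟫ = 0 := by
    intro i; rw [hN i, inner_cross_left]
  have tOdd : ∀ i : ℤ, Odd i → T (i + 1) = T i := by
    intro i hi
    refine (unit_inner_one (tnorm i) (tnorm (i + 1)) ?_).symm
    rw [inner_eq_cos_angle (tnorm i) (tnorm (i + 1)), hangT i, hθo i hi, Real.cos_zero]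
  constructor
  case tnorm => exact tnorm
  case nnorm => exact nnorm
  case bnorm => exact bnorm
  case tn => exact tn
  case tb => exact tb
  case nb => exact nb
  case norient => exact hN
  case gstep => intro i; rw [hT i]; abel
  case gback =>
    intro i
    have h := hT (i - 1)
    rw [sub_add_cancel] at h
    rw [h]; abel
  case tOdd => exact tOdd
  case bOdd => exact hBodd
  case innTT =>
    intro i
    rw [inner_eq_cos_angle (tnorm i) (tnorm (i + 1)), hangT i]
  case innBB =>
    intro i
    rw [inner_eq_cos_angle (bnorm i) (bnorm (i + 1)), hangB i]
  case fE1 =>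
    intro i hi
    rw [hBeven i hi, real_inner_smul_left, inner_cross_right, mul_zero]
  case fE2 =>
    intro i hi
    rw [hN i, triple_cyclic, hBeven i hi, real_inner_smul_right,
      real_inner_self_eq_norm_sq]
    positivity
  case fO1 =>
    intro i hi
    rw [hBodd' i hi, real_inner_smul_left, inner_cross_left, mul_zero]
  case fO2 =>
    intro i hi
    rw [hN i, triple_cyclic, cross3_anticomm (T (i - 1)) (T i), inner_neg_left,
      hBodd' i hi, real_inner_smul_right, real_inner_self_eq_norm_sq]
    have : (0:ℝ) ≤ ‖cross3 (T (i-1)) (T i)‖⁻¹ * ‖cross3 (T (i-1)) (T i)‖ ^ 2 := by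
      positivity
    linarith
  case fT =>
    intro i hi
    rw [← tOdd i hi]; exact tb (i + 1)
  case fTw =>
    intro i hi
    rw [real_inner_comm]; exact htwist i hi
  case fBm =>
    intro i hi
    have hodd : Odd (i - 1) := odsub i hi
    have htw := htwist (i - 1) hodd
    rw [sub_add_cancel] at htw
    have hTm : T (i - 1) = T i := by
      have h := tOdd (i - 1) hodd
      rw [sub_add_cancel] at h
      exact h.symm
    rw [hN (i - 1), hTm, real_inner_comm, triple_cyclic,
      cross3_anticomm (B i) (T i), inner_neg_left, ← hN i] at htw
    linarith
  case fBmT =>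
    intro i hi
    have hodd : Odd (i - 1) := odsub i hi
    have hTm : T (i - 1) = T i := by
      have h := tOdd (i - 1) hodd
      rw [sub_add_cancel] at h
      exact h.symm
    rw [← hTm]; exact tb (i - 1)

end DFTUnique

open DFTUnique

/-- Discrete fundamental theorem (uniqueness): two discrete curves parametrized by arc
length, satisfying the midpoint condition and the positive-twist condition, with the same
initial point, the same initial edge frame, and the same turning angles `θᵢ` between
consecutive tangents and twisting angles `φᵢ` between consecutive binormals, coincide. -/
theorem discrete_fundamental_theorem_uniqueness
    (θ φ : ℤ → ℝ)
    (hθe : ∀ i : ℤ, Even i → θ i ∈ Set.Ioc 0 (Real.pi / 2))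
    (hθo : ∀ i : ℤ, Odd i → θ i = 0)
    (hφo : ∀ i : ℤ, Odd i → φ i ∈ Set.Icc 0 (Real.pi / 2))
    (hφe : ∀ i : ℤ, Even i → φ i = 0)
    (γ₀ T₀ N₀ B₀ : E3)
    (hT₀ : ‖T₀‖ = 1) (hN₀ : ‖N₀‖ = 1) (hB₀ : ‖B₀‖ = 1)
    (hTN₀ : ⟪T₀, N₀⟫ = 0) (hTB₀ : ⟪T₀, B₀⟫ = 0) (hNB₀ : ⟪N₀, B₀⟫ = 0)
    (hor₀ : N₀ = cross3 B₀ T₀)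
    -- the first curve `γ` and its edge Frenet frame
    (γ T N B : ℤ → E3)
    (hlen : ∀ i : ℤ, ‖γ (i + 1) - γ i‖ = 1)
    (hmid : ∀ i : ℤ, Even i → γ i = (2 : ℝ)⁻¹ • (γ (i + 1) + γ (i - 1)))
    (hT : ∀ i : ℤ, T i = γ (i + 1) - γ i)
    (hcross : ∀ i : ℤ, Even i → cross3 (T i) (T (i + 1)) ≠ 0)
    (hBeven : ∀ i : ℤ, Even i →
      B i = ‖cross3 (T i) (T (i + 1))‖⁻¹ • cross3 (T i) (T (i + 1)))
    (hBodd : ∀ i : ℤ, Odd i → B i = B (i - 1))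
    (hN : ∀ i : ℤ, N i = cross3 (B i) (T i))
    (htwist : ∀ i : ℤ, Odd i → ⟪B (i + 1), N i⟫ ≤ 0)
    (hinit : γ 0 = γ₀ ∧ T 0 = T₀ ∧ N 0 = N₀ ∧ B 0 = B₀)
    (hangT : ∀ i : ℤ, InnerProductGeometry.angle (T i) (T (i + 1)) = θ i)
    (hangB : ∀ i : ℤ, InnerProductGeometry.angle (B i) (B (i + 1)) = φ i)
    -- the second curve `γ'` and its edge Frenet frame
    (γ' T' N' B' : ℤ → E3)
    (hlen' : ∀ i : ℤ, ‖γ' (i + 1) - γ' i‖ = 1)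
    (hmid' : ∀ i : ℤ, Even i → γ' i = (2 : ℝ)⁻¹ • (γ' (i + 1) + γ' (i - 1)))
    (hT' : ∀ i : ℤ, T' i = γ' (i + 1) - γ' i)
    (hcross' : ∀ i : ℤ, Even i → cross3 (T' i) (T' (i + 1)) ≠ 0)
    (hBeven' : ∀ i : ℤ, Even i →
      B' i = ‖cross3 (T' i) (T' (i + 1))‖⁻¹ • cross3 (T' i) (T' (i + 1)))
    (hBodd' : ∀ i : ℤ, Odd i → B' i = B' (i - 1))
    (hN' : ∀ i : ℤ, N' i = cross3 (B' i) (T' i))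
    (htwist' : ∀ i : ℤ, Odd i → ⟪B' (i + 1), N' i⟫ ≤ 0)
    (hinit' : γ' 0 = γ₀ ∧ T' 0 = T₀ ∧ N' 0 = N₀ ∧ B' 0 = B₀)
    (hangT' : ∀ i : ℤ, InnerProductGeometry.angle (T' i) (T' (i + 1)) = θ i)
    (hangB' : ∀ i : ℤ, InnerProductGeometry.angle (B' i) (B' (i + 1)) = φ i) :
    γ = γ' := by
  obtain ⟨hg0, ht0, hn0, hb0⟩ := hinit
  obtain ⟨hg0', ht0', hn0', hb0'⟩ := hinit'
  have P1 : Pack θ φ γ T N B :=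
    mk_pack θ φ hθo γ T N B hlen hT hcross hBeven hBodd hN htwist hangT hangB
  have P2 : Pack θ φ γ' T' N' B' :=
    mk_pack θ φ hθo γ' T' N' B' hlen' hT' hcross' hBeven' hBodd' hN' htwist' hangT' hangB'
  set Q : ℤ → Prop := fun i => γ i = γ' i ∧ T i = T' i ∧ B i = B' i with hQ
  have oddadd : ∀ i : ℤ, Even i → Odd (i + 1) := by
    intro i hi; rcases hi with ⟨k, hk⟩; exact ⟨k, by omega⟩
  have odsub : ∀ i : ℤ, Even i → Odd (i - 1) := by
    intro i hi; rcases hi with ⟨k, hk⟩; exact ⟨k - 1, by omega⟩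
  -- forward step
  have step : ∀ i : ℤ, Q i → Q (i + 1) := by
    rintro i ⟨hg, ht, hb⟩
    have hn : N i = N' i := by rw [P1.norient i, P2.norient i, ht, hb]
    have hg1 : γ (i + 1) = γ' (i + 1) := by rw [P1.gstep i, P2.gstep i, hg, ht]
    rcases Int.even_or_odd i with hi | hi
    · -- even index: reconstruct T (i+1), and B (i+1) = B i
      have hT1 : T (i + 1) = T' (i + 1) := by
        refine plane_unique (T i) (N i) (B i) (P1.tnorm i) (P1.nnorm i) (P1.bnorm i)
          (P1.tn i) (P1.tb i) (P1.nb i) (P1.tnorm (i + 1)) (P2.tnorm (i + 1))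
          (P1.fE1 i hi) ?_ ?_ (P1.fE2 i hi) ?_
        · rw [hb]; exact P2.fE1 i hi
        · have h2 := P2.innTT i
          rw [← ht] at h2
          rw [P1.innTT i, h2]
        · rw [hn]; exact P2.fE2 i hi
      have hB1 : B (i + 1) = B' (i + 1) := by
        have h1 := P1.bOdd (i + 1) (oddadd i hi)
        have h2 := P2.bOdd (i + 1) (oddadd i hi)
        rw [add_sub_cancel_right] at h1 h2
        rw [h1, h2, hb]
      exact ⟨hg1, hT1, hB1⟩
    · -- odd index: T (i+1) = T i and reconstruct B (i+1)
      have hT1 : T (i + 1) = T' (i + 1) := by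
        rw [P1.tOdd i hi, P2.tOdd i hi, ht]
      have hB1 : B (i + 1) = B' (i + 1) := by
        refine plane_unique (B i) (-N i) (T i) (P1.bnorm i) (by rw [norm_neg]; exact P1.nnorm i)
          (P1.tnorm i) ?_ ?_ ?_ (P1.bnorm (i + 1)) (P2.bnorm (i + 1))
          (P1.fT i hi) ?_ ?_ ?_ ?_
        · rw [inner_neg_right, real_inner_comm, P1.nb i, neg_zero]
        · rw [real_inner_comm]; exact P1.tb i
        · rw [inner_neg_left, real_inner_comm, P1.tn i, neg_zero]
        · rw [ht]; exact P2.fT i hi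
        · have h2 := P2.innBB i
          rw [← hb] at h2
          rw [P1.innBB i, h2]
        · rw [inner_neg_left]; linarith [P1.fTw i hi]
        · rw [inner_neg_left, hn]; linarith [P2.fTw i hi]
      exact ⟨hg1, hT1, hB1⟩
  -- backward step
  have back : ∀ i : ℤ, Q i → Q (i - 1) := by
    rintro i ⟨hg, ht, hb⟩
    have hn : N i = N' i := by rw [P1.norient i, P2.norient i, ht, hb]
    rcases Int.even_or_odd i with hi | hi
    · -- even index: T (i-1) = T i, reconstruct B (i-1)
      have hodd : Odd (i - 1) := odsub i hi
      have hTm1 : T (i - 1) = T i := by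
        have h := P1.tOdd (i - 1) hodd
        rw [sub_add_cancel] at h
        exact h.symm
      have hTm2 : T' (i - 1) = T' i := by
        have h := P2.tOdd (i - 1) hodd
        rw [sub_add_cancel] at h
        exact h.symm
      have hT1 : T (i - 1) = T' (i - 1) := by rw [hTm1, hTm2, ht]
      have hg1 : γ (i - 1) = γ' (i - 1) := by
        rw [P1.gback i, P2.gback i, hg, hT1]
      have hB1 : B (i - 1) = B' (i - 1) := by
        have c1 : ⟪B i, B (i - 1)⟫ = Real.cos (φ (i - 1)) := by
          have h := P1.innBB (i - 1)
          rw [sub_add_cancel] at h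
          rw [real_inner_comm]; exact h
        have c2 : ⟪B' i, B' (i - 1)⟫ = Real.cos (φ (i - 1)) := by
          have h := P2.innBB (i - 1)
          rw [sub_add_cancel] at h
          rw [real_inner_comm]; exact h
        refine plane_unique (B i) (N i) (T i) (P1.bnorm i) (P1.nnorm i) (P1.tnorm i)
          ?_ ?_ ?_ (P1.bnorm (i - 1)) (P2.bnorm (i - 1))
          (P1.fBmT i hi) ?_ ?_ (P1.fBm i hi) ?_
        · rw [real_inner_comm]; exact P1.nb i
        · rw [real_inner_comm]; exact P1.tb i
        · rw [real_inner_comm]; exact P1.tn i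
        · rw [ht]; exact P2.fBmT i hi
        · rw [← hb] at c2; rw [c1, c2]
        · rw [hn]; exact P2.fBm i hi
      exact ⟨hg1, hT1, hB1⟩
    · -- odd index: B (i-1) = B i, reconstruct T (i-1)
      have hB1 : B (i - 1) = B' (i - 1) := by
        rw [← P1.bOdd i hi, ← P2.bOdd i hi, hb]
      have hT1 : T (i - 1) = T' (i - 1) := by
        have c1 : ⟪T i, T (i - 1)⟫ = Real.cos (θ (i - 1)) := by
          have h := P1.innTT (i - 1)
          rw [sub_add_cancel] at h
          rw [real_inner_comm]; exact h
        have c2 : ⟪T' i, T' (i - 1)⟫ = Real.cos (θ (i - 1)) := by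
          have h := P2.innTT (i - 1)
          rw [sub_add_cancel] at h
          rw [real_inner_comm]; exact h
        refine plane_unique (T i) (-N i) (B i) (P1.tnorm i)
          (by rw [norm_neg]; exact P1.nnorm i) (P1.bnorm i)
          ?_ (P1.tb i) ?_ (P1.tnorm (i - 1)) (P2.tnorm (i - 1))
          (P1.fO1 i hi) ?_ ?_ ?_ ?_
        · rw [inner_neg_right, P1.tn i, neg_zero]
        · rw [inner_neg_left, P1.nb i, neg_zero]
        · rw [hb]; exact P2.fO1 i hi
        · rw [← ht] at c2; rw [c1, c2]
        · rw [inner_neg_left]; linarith [P1.fO2 i hi]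
        · rw [inner_neg_left, hn]; linarith [P2.fO2 i hi]
      have hg1 : γ (i - 1) = γ' (i - 1) := by
        rw [P1.gback i, P2.gback i, hg, hT1]
      exact ⟨hg1, hT1, hB1⟩
  have q0 : Q 0 := ⟨hg0.trans hg0'.symm, ht0.trans ht0'.symm, hb0.trans hb0'.symm⟩
  have qall : ∀ i : ℤ, Q i := by
    intro i
    induction i using Int.induction_on with
    | zero => exact q0
    | succ n h => exact step n h
    | pred n h => exact back (-n) h
  funext i
  exact (qall i).1
end
end
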